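/- For antichains of intervals A, B, C over a finite totally ordered set, with the Brouwerian difference A − B defined as the set of intervals I ∈ A such that no J ∈ B satisfies J ⊆ I, we have A − B ≤ C if and only if A ≤ B ∨ C, where A ≤ B means every I ∈ A contains some J ∈ B, and B ∨ C is the set of inclusion-minimal intervals of B ∪ C. -/

import Mathlib

/-- `cont p q`: interval `p` is contained in interval `q` (intervals as pairs
(left extreme, right extreme)). -/
def cont {O : Type*} [LinearOrder O] (p q : O × O) : Prop :=
  q.1 ≤ p.1 ∧ p.2 ≤ q.2

/-- `ale A B`: every interval of `A` contains some interval of `B`. -/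
def ale {O : Type*} [LinearOrder O] (A B : Set (O × O)) : Prop :=
  ∀ p ∈ A, ∃ q ∈ B, cont q p

/-- The join `A ∨ B`: inclusion-minimal intervals of `A ∪ B`. -/
def ajoin {O : Type*} [LinearOrder O] (A B : Set (O × O)) : Set (O × O) :=
  {p ∈ A ∪ B | ∀ q ∈ A ∪ B, cont q p → q = p}

/-- The Brouwerian difference `A − B`: intervals of `A` containing no interval of `B`. -/
def adiff {O : Type*} [LinearOrder O] (A B : Set (O × O)) : Set (O × O) :=
  {p ∈ A | ∀ q ∈ B, ¬ cont q p}


lemma exists_min {O : Type*} [LinearOrder O] [Fintype O] (S : Set (O × O)) (q : O × O)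
    (hq : q ∈ S) : ∃ m ∈ S, cont m q ∧ ∀ r ∈ S, cont r m → r = m := by
  classical
  set f : O × O → Oᵒᵈ × O := fun p => (OrderDual.toDual p.1, p.2) with hf
  have hfle : ∀ p r : O × O, f p ≤ f r ↔ cont p r := by
    intro p r
    simp [hf, cont, Prod.le_def, and_comm]
  have hfin : ({r ∈ S | cont r q}).Finite := Set.toFinite _
  have hne : ({r ∈ S | cont r q}).Nonempty := ⟨q, hq, le_refl _, le_refl _⟩
  obtain ⟨m, hm, hmin'⟩ := Set.Finite.exists_minimalFor f _ hfin hne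
  have hmin : ∀ a' ∈ {r ∈ S | cont r q}, f a' ≤ f m → f m = f a' :=
    fun a' ha h => le_antisymm (hmin' ha h) h
  refine ⟨m, hm.1, hm.2, fun r hr hrm => ?_⟩
  have hrq : cont r q := ⟨hm.2.1.trans hrm.1, hrm.2.trans hm.2.2⟩
  have := hmin r ⟨hr, hrq⟩ ((hfle r m).2 hrm)
  have : (OrderDual.toDual m.1, m.2) = (OrderDual.toDual r.1, r.2) := this
  exact Prod.ext (congrArg (OrderDual.ofDual ∘ Prod.fst) this).symm
    (congrArg Prod.snd this).symm

/-- `A − B ≤ C` iff `A ≤ B ∨ C`. -/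
theorem stmt11 {O : Type*} [LinearOrder O] [Fintype O] (A B C : Set (O × O))
    (hA : ∀ p ∈ A, p.1 ≤ p.2) (hB : ∀ p ∈ B, p.1 ≤ p.2) (hC : ∀ p ∈ C, p.1 ≤ p.2)
    (hAa : IsAntichain (cont (O := O)) A)
    (hBa : IsAntichain (cont (O := O)) B)
    (hCa : IsAntichain (cont (O := O)) C) :
    ale (adiff A B) C ↔ ale A (ajoin B C) := by
  constructor
  · intro h p hp
    by_cases hb : ∃ q ∈ B, cont q p
    · obtain ⟨q, hq, hqp⟩ := hb
      obtain ⟨m, hm, hmq, hmin⟩ := exists_min (B ∪ C) q (Or.inl hq)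
      exact ⟨m, ⟨hm, fun r hr hrm => hmin r hr hrm⟩,
        ⟨hqp.1.trans hmq.1, hmq.2.trans hqp.2⟩⟩
    · push_neg at hb
      obtain ⟨q, hq, hqp⟩ := h p ⟨hp, hb⟩
      obtain ⟨m, hm, hmq, hmin⟩ := exists_min (B ∪ C) q (Or.inr hq)
      exact ⟨m, ⟨hm, fun r hr hrm => hmin r hr hrm⟩,
        ⟨hqp.1.trans hmq.1, hmq.2.trans hqp.2⟩⟩
  · intro h p hp
    obtain ⟨q, ⟨hq, _⟩, hqp⟩ := h p hp.1
    cases hq with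
    | inl hqB => exact absurd hqp (hp.2 q hqB)
    | inr hqC => exact ⟨q, hqC, hqp⟩
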